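/- arXiv:math/0608246 — 2 statements merged into one kernel-verified Lean document; each statement's English description precedes it below -/
import Mathlib

section
/- Let (σ,τ) be a weighted substitution with σ primitive, and let G = B(σ,τ) be the closed multiplicative subgroup of ℝ₊ generated by {τ^n(a)_i : n ≥ 0, σ^n(a)_i = a}. Then there exists a function g: 𝔸 → ℝ₊ such that g(σ(a)_i)·G = g(a)·τ(a)_i·G for every a ∈ 𝔸 and 0 ≤ i < |σ(a)|. -/
def wStep {A : Type} (σ : A → List A) (τ : A → List ℝ) :
    List (A × ℝ) → List (A × ℝ) :=
  fun l => l.flatMap fun p => ((σ p.1).zip (τ p.1)).map fun q => (q.1, p.2 * q.2)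

/-- Generators of the base set: the weights `τ^n(a)_i` of occurrences of `a`
in `σ^n(a)`, for all `n ≥ 0` and `a`. -/
def baseGens {A : Type} (σ : A → List A) (τ : A → List ℝ) : Set ℝ :=
  {w | ∃ (n : ℕ) (a : A), (a, w) ∈ (wStep σ τ)^[n] [(a, 1)]}

/-- The base set `B(σ,τ)`: the closed multiplicative subgroup of `ℝ₊`
generated by `baseGens`, i.e. the positive reals lying in the closure of the
multiplicative subgroup generated by the weights of returning occurrences. -/
def baseSet {A : Type} (σ : A → List A) (τ : A → List ℝ) : Set ℝ :=
  {x | 0 < x ∧ x ∈ closure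
    (↑(Submonoid.closure (baseGens σ τ ∪ (baseGens σ τ)⁻¹)) : Set ℝ)}

section Aux

variable {A : Type} (σ : A → List A) (τ : A → List ℝ)

lemma wStep_subset {l l' : List (A × ℝ)} (h : ∀ p ∈ l, p ∈ l') :
    ∀ p ∈ wStep σ τ l, p ∈ wStep σ τ l' := by
  intro p hp
  simp only [wStep, List.mem_flatMap] at hp ⊢
  obtain ⟨q, hq, hq2⟩ := hp
  exact ⟨q, h q hq, hq2⟩

lemma wStep_iter_subset (n : ℕ) {l l' : List (A × ℝ)} (h : ∀ p ∈ l, p ∈ l') :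
    ∀ p ∈ (wStep σ τ)^[n] l, p ∈ (wStep σ τ)^[n] l' := by
  induction n generalizing l l' with
  | zero => simpa using h
  | succ n ih =>
    intro p hp
    rw [Function.iterate_succ_apply] at hp ⊢
    exact ih (wStep_subset σ τ h) p hp

lemma wStep_map_scale (w : ℝ) (l : List (A × ℝ)) :
    wStep σ τ (l.map fun p => (p.1, w * p.2)) =
      (wStep σ τ l).map fun p => (p.1, w * p.2) := by
  simp only [wStep, List.flatMap_map, List.map_flatMap, List.map_map]
  apply List.flatMap_congr <;> intro p _
  · simp [Function.comp, mul_assoc]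

lemma iter_map_scale (w : ℝ) (a : A) :
    ∀ n : ℕ, ((wStep σ τ)^[n] [(a, 1)]).map (fun p => (p.1, w * p.2)) =
      (wStep σ τ)^[n] [(a, w)] := by
  intro n
  induction n with
  | zero => simp
  | succ n ih =>
    rw [Function.iterate_succ_apply', Function.iterate_succ_apply', ← ih,
      wStep_map_scale]

lemma mem_iter_scale {n : ℕ} {a c : A} {w u : ℝ}
    (h : (c, u) ∈ (wStep σ τ)^[n] [(a, 1)]) :
    (c, w * u) ∈ (wStep σ τ)^[n] [(a, w)] := by
  rw [← iter_map_scale σ τ w a n]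
  exact List.mem_map_of_mem h

lemma mem_iter_comp {n m : ℕ} {a b c : A} {w u : ℝ}
    (h1 : (a, w) ∈ (wStep σ τ)^[n] [(b, 1)])
    (h2 : (c, u) ∈ (wStep σ τ)^[m] [(a, 1)]) :
    (c, w * u) ∈ (wStep σ τ)^[n + m] [(b, 1)] := by
  have hs := mem_iter_scale σ τ (w := w) h2
  have h3 := wStep_iter_subset σ τ m
    (l := [(a, w)]) (l' := (wStep σ τ)^[n] [(b, 1)]) (by simpa using h1) _ hs
  rw [add_comm, Function.iterate_add_apply]
  exact h3

lemma iter_pos (hw : ∀ a, ∀ w ∈ τ a, 0 < w) :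
    ∀ (n : ℕ) (l : List (A × ℝ)), (∀ p ∈ l, 0 < p.2) →
      ∀ p ∈ (wStep σ τ)^[n] l, 0 < p.2 := by
  intro n
  induction n with
  | zero => simpa using fun l h => h
  | succ n ih =>
    intro l hl p hp
    rw [Function.iterate_succ_apply] at hp
    refine ih _ ?_ p hp
    intro q hq
    simp only [wStep, List.mem_flatMap, List.mem_map] at hq
    obtain ⟨r, hr, s, hs, rfl⟩ := hq
    exact mul_pos (hl r hr) (hw _ _ (List.of_mem_zip hs).2)

variable [Inhabited A]

lemma one_step (hlen : ∀ a, (σ a).length = (τ a).length) (a : A) (i : ℕ)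
    (hi : i < (σ a).length) :
    ((σ a).getD i default, (τ a).getD i 0) ∈ wStep σ τ [(a, 1)] := by
  have hτ : i < (τ a).length := hlen a ▸ hi
  have hz : i < ((σ a).zip (τ a)).length := by
    rw [List.length_zip]; omega
  have hm : ((σ a)[i], (τ a)[i]) ∈ (σ a).zip (τ a) := by
    have := List.getElem_mem hz
    rwa [List.getElem_zip] at this
  simp only [wStep, List.flatMap_cons, List.flatMap_nil, List.append_nil,
    List.mem_map]
  refine ⟨((σ a)[i], (τ a)[i]), hm, ?_⟩
  rw [List.getD_eq_getElem _ _ hi, List.getD_eq_getElem _ _ hτ]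
  simp

lemma closure_inv {x : ℝ}
    (hx : x ∈ Submonoid.closure (baseGens σ τ ∪ (baseGens σ τ)⁻¹)) :
    x⁻¹ ∈ Submonoid.closure (baseGens σ τ ∪ (baseGens σ τ)⁻¹) := by
  induction hx using Submonoid.closure_induction with
  | mem y h =>
    rcases h with h | h
    · exact Submonoid.subset_closure (Or.inr (by simpa using h))
    · exact Submonoid.subset_closure (Or.inl (Set.mem_inv.mp h))
  | one => simpa using Submonoid.one_mem _
  | mul y z _ _ ihy ihz => rw [mul_inv]; exact mul_mem ihy ihz

lemma baseSet_mul {x y : ℝ} (hx : x ∈ baseSet σ τ) (hy : y ∈ baseSet σ τ) :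
    x * y ∈ baseSet σ τ := by
  refine ⟨mul_pos hx.1 hy.1, ?_⟩
  have hx2 : x ∈ (Submonoid.closure
      (baseGens σ τ ∪ (baseGens σ τ)⁻¹)).topologicalClosure := hx.2
  have hy2 : y ∈ (Submonoid.closure
      (baseGens σ τ ∪ (baseGens σ τ)⁻¹)).topologicalClosure := hy.2
  exact mul_mem hx2 hy2

lemma baseSet_inv {x : ℝ} (hx : x ∈ baseSet σ τ) : x⁻¹ ∈ baseSet σ τ := by
  obtain ⟨u, hu, hlim⟩ := mem_closure_iff_seq_limit.mp hx.2
  refine ⟨inv_pos.mpr hx.1, mem_closure_iff_seq_limit.mpr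
    ⟨fun n => (u n)⁻¹, fun n => closure_inv σ τ (hu n), hlim.inv₀ (ne_of_gt hx.1)⟩⟩

end Aux

/-- For a primitive weighted substitution `(σ, τ)` with base group
`G = B(σ, τ)`, there is a function `g : 𝔸 → ℝ₊` with
`g(σ(a)_i)·G = g(a)·τ(a)_i·G` for all `a` and `0 ≤ i < |σ(a)|`. -/
theorem exists_height_function
    (A : Type) [Fintype A] [Inhabited A]
    (σ : A → List A) (τ : A → List ℝ)
    (hlen : ∀ a, (σ a).length = (τ a).length)
    (hne : ∀ a, σ a ≠ [])
    (hw : ∀ a, ∀ w ∈ τ a, 0 < w ∧ w < 1)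
    (hsum : ∀ a, (τ a).sum = 1)
    (hprim : ∃ n : ℕ, 1 ≤ n ∧ ∀ a a' : A,
      ∃ p ∈ (wStep σ τ)^[n] [(a, 1)], p.1 = a') :
    ∃ g : A → ℝ, (∀ a, 0 < g a) ∧
      ∀ (a : A) (i : ℕ), i < (σ a).length →
        {x : ℝ | ∃ y ∈ baseSet σ τ, x = g ((σ a).getD i default) * y} =
        {x : ℝ | ∃ y ∈ baseSet σ τ, x = g a * (τ a).getD i 0 * y} := by
  obtain ⟨N, hN1, hN⟩ := hprim
  choose f hf hf1 using hN
  have hwpos : ∀ a, ∀ w ∈ τ a, 0 < w := fun a w h => (hw a w h).1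
  set d : A := default with hd
  -- the height function
  refine ⟨fun a => (f d a).2, ?_, ?_⟩
  · intro a
    exact iter_pos σ τ hwpos N [(d, 1)] (by simp) (f d a) (hf d a)
  intro a i hi
  set g : A → ℝ := fun a => (f d a).2 with hg
  -- basic facts
  have hmem : ∀ a : A, (a, g a) ∈ (wStep σ τ)^[N] [(d, 1)] := by
    intro a
    have h := hf d a
    have : (a, g a) = f d a := by
      rw [hg]; exact Prod.ext (hf1 d a).symm rfl
    rwa [this]
  have hgpos : ∀ a, 0 < g a := fun a =>
    iter_pos σ τ hwpos N [(d, 1)] (by simp) ((a : A), g a) (hmem a)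
  -- key ratio lemma: two weights of occurrences of the same letter from d
  -- differ by an element of the base set
  have ratio : ∀ (b : A) (n m : ℕ) (w w' : ℝ),
      (b, w) ∈ (wStep σ τ)^[n] [(d, 1)] →
      (b, w') ∈ (wStep σ τ)^[m] [(d, 1)] →
      0 < w → 0 < w' → w * w'⁻¹ ∈ baseSet σ τ := by
    intro b n m w w' h1 h2 hwp hwp'
    -- return occurrence of d in σ^N(b)
    have hret := hf b d
    set u : ℝ := (f b d).2 with hu
    have hretd : (d, u) ∈ (wStep σ τ)^[N] [(b, 1)] := by
      have : (d, u) = f b d := Prod.ext (hf1 b d).symm rfl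
      rwa [this]
    have hupos : 0 < u := iter_pos σ τ hwpos N [(b, 1)] (by simp) ((d : A), u) hretd
    have hg1 : w * u ∈ baseGens σ τ := ⟨n + N, d, mem_iter_comp σ τ h1 hretd⟩
    have hg2 : w' * u ∈ baseGens σ τ := ⟨m + N, d, mem_iter_comp σ τ h2 hretd⟩
    refine ⟨mul_pos hwp (inv_pos.mpr hwp'), ?_⟩
    apply subset_closure
    have hm1 : (w * u : ℝ) ∈ Submonoid.closure
        (baseGens σ τ ∪ (baseGens σ τ)⁻¹) := Submonoid.subset_closure (Or.inl hg1)
    have hm2 : (w' * u : ℝ)⁻¹ ∈ Submonoid.closure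
        (baseGens σ τ ∪ (baseGens σ τ)⁻¹) :=
      Submonoid.subset_closure (Or.inr (by simpa using hg2))
    have : w * w'⁻¹ = (w * u) * (w' * u)⁻¹ := by
      field_simp
    rw [this]
    exact mul_mem hm1 hm2
  -- the two occurrences of b := σ(a)_i
  set b : A := (σ a).getD i default with hb
  set t : ℝ := (τ a).getD i 0 with ht
  have htpos : 0 < t := by
    have hτ : i < (τ a).length := hlen a ▸ hi
    rw [ht, List.getD_eq_getElem _ _ hτ]
    exact hwpos a _ (List.getElem_mem hτ)
  have h1 : (b, g a * t) ∈ (wStep σ τ)^[N + 1] [(d, 1)] :=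
    mem_iter_comp σ τ (hmem a) (one_step σ τ hlen a i hi)
  have h2 : (b, g b) ∈ (wStep σ τ)^[N] [(d, 1)] := hmem b
  have hr : (g a * t) * (g b)⁻¹ ∈ baseSet σ τ :=
    ratio b (N + 1) N _ _ h1 h2 (mul_pos (hgpos a) htpos) (hgpos b)
  have hr' : (g b) * (g a * t)⁻¹ ∈ baseSet σ τ :=
    ratio b N (N + 1) _ _ h2 h1 (hgpos b) (mul_pos (hgpos a) htpos)
  have hne1 : g a * t ≠ 0 := (mul_pos (hgpos a) htpos).ne'
  have hne2 : g b ≠ 0 := (hgpos b).ne'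
  -- set equality
  ext x
  simp only [Set.mem_setOf_eq]
  constructor
  · rintro ⟨y, hy, rfl⟩
    refine ⟨(g b) * (g a * t)⁻¹ * y, baseSet_mul σ τ hr' hy, ?_⟩
    field_simp
    rw [mul_div_assoc, div_self (hgpos a).ne', mul_one]
  · rintro ⟨y, hy, rfl⟩
    refine ⟨(g a * t) * (g b)⁻¹ * y, baseSet_mul σ τ hr hy, ?_⟩
    field_simp
end

section
/- Let (σ,τ) be a weighted substitution on a finite alphabet 𝔸 with σ primitive, and suppose B(σ,τ) = {λ^n : n ∈ ℤ} for some λ > 1. Then λ is an algebraic number. -/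
namespace B44
variable {A : Type} (σ : A → List A) (τ : A → List ℝ)

lemma wStep_append (l₁ l₂ : List (A × ℝ)) :
    wStep σ τ (l₁ ++ l₂) = wStep σ τ l₁ ++ wStep σ τ l₂ := by
  simp [wStep]

lemma iter_append (n : ℕ) (l₁ l₂ : List (A × ℝ)) :
    (wStep σ τ)^[n] (l₁ ++ l₂) = (wStep σ τ)^[n] l₁ ++ (wStep σ τ)^[n] l₂ := by
  induction n generalizing l₁ l₂ with
  | zero => simp
  | succ n ih => rw [Function.iterate_succ_apply, Function.iterate_succ_apply,
      Function.iterate_succ_apply, wStep_append, ih]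

lemma wStep_scale (w : ℝ) (l : List (A × ℝ)) :
    wStep σ τ (l.map (fun p => (p.1, w * p.2))) =
      (wStep σ τ l).map (fun p => (p.1, w * p.2)) := by
  simp [wStep, List.map_flatMap, List.flatMap_map, List.map_map, Function.comp_def, mul_assoc]

lemma iter_scale (n : ℕ) (a : A) (w : ℝ) :
    (wStep σ τ)^[n] [(a, w)] =
      ((wStep σ τ)^[n] [(a, 1)]).map (fun p => (p.1, w * p.2)) := by
  induction n with
  | zero => simp
  | succ n ih =>
    rw [Function.iterate_succ_apply', Function.iterate_succ_apply', ih, wStep_scale]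

lemma mem_iter_of_mem {n : ℕ} {p q : A × ℝ} {l : List (A × ℝ)}
    (hq : q ∈ l) (hp : p ∈ (wStep σ τ)^[n] [q]) : p ∈ (wStep σ τ)^[n] l := by
  induction l with
  | nil => simp at hq
  | cons x xs ih =>
    rw [show x :: xs = [x] ++ xs from rfl, iter_append]
    rcases List.mem_cons.1 hq with h | h
    · exact List.mem_append_left _ (h ▸ hp)
    · exact List.mem_append_right _ (ih h)

lemma wStep_comp {m n : ℕ} {a b c : A} {w u : ℝ}
    (h1 : (b, w) ∈ (wStep σ τ)^[m] [(a, 1)])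
    (h2 : (c, u) ∈ (wStep σ τ)^[n] [(b, 1)]) :
    (c, w * u) ∈ (wStep σ τ)^[m + n] [(a, 1)] := by
  rw [add_comm, Function.iterate_add_apply]
  apply mem_iter_of_mem σ τ h1
  rw [iter_scale]
  exact List.mem_map.2 ⟨(c, u), h2, rfl⟩

lemma weight_bound {ρ : ℝ} (hw : ∀ a, ∀ w ∈ τ a, 0 < w) (hρ : ∀ a, ∀ w ∈ τ a, w ≤ ρ)
    {n : ℕ} {a b : A} {w : ℝ} (h : (b, w) ∈ (wStep σ τ)^[n] [(a, 1)]) :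
    0 < w ∧ w ≤ ρ ^ n := by
  induction n generalizing b w with
  | zero =>
    simp only [Function.iterate_zero, id_eq, List.mem_singleton, Prod.mk.injEq] at h
    rw [h.2, pow_zero]
    exact ⟨one_pos, le_refl 1⟩
  | succ n ih =>
    rw [Function.iterate_succ_apply'] at h
    rcases List.mem_flatMap.1 h with ⟨p, hp, hmem⟩
    rcases List.mem_map.1 hmem with ⟨q, hq, heq⟩
    obtain ⟨hq1, hq2⟩ := List.of_mem_zip hq
    have hih := ih (b := p.1) (w := p.2) (by rwa [Prod.mk.eta])
    have hq2pos := hw p.1 q.2 hq2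
    have hq2le := hρ p.1 q.2 hq2
    have hww : w = p.2 * q.2 := by
      have := congrArg Prod.snd heq; simpa using this.symm
    constructor
    · rw [hww]; exact mul_pos hih.1 hq2pos
    · rw [hww, pow_succ]
      exact mul_le_mul hih.2 hq2le hq2pos.le (pow_nonneg (hq2pos.le.trans hq2le) n)

lemma list_le_foldr_max (l : List ℝ) : ∀ w ∈ l, w ≤ l.foldr max 0 := by
  induction l with
  | nil => simp
  | cons x xs ih =>
    intro w hw
    rcases List.mem_cons.1 hw with h | h
    · subst h; exact le_max_left _ _
    · exact le_trans (ih w h) (le_max_right _ _)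

lemma list_foldr_max_lt (l : List ℝ) (h : ∀ w ∈ l, w < 1) : l.foldr max 0 < 1 := by
  induction l with
  | nil => simpa using one_pos
  | cons x xs ih =>
    simp only [List.foldr_cons]
    exact max_lt (h x List.mem_cons_self) (ih fun w hw => h w (List.mem_cons_of_mem _ hw))

end B44

/-- Theorem 4.4: if `(σ, τ)` is a primitive weighted substitution whose base
set is the discrete group `B(σ,τ) = {lam^n : n ∈ ℤ}` with `lam > 1`, then
`lam` is an algebraic number. -/
theorem base_generator_algebraic
    (A : Type) [Fintype A] [Inhabited A]
    (σ : A → List A) (τ : A → List ℝ)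
    (hlen : ∀ a, (σ a).length = (τ a).length)
    (hne : ∀ a, σ a ≠ [])
    (hw : ∀ a, ∀ w ∈ τ a, 0 < w ∧ w < 1)
    (hsum : ∀ a, (τ a).sum = 1)
    (hprim : ∃ n : ℕ, 1 ≤ n ∧ ∀ a a' : A,
      ∃ p ∈ (wStep σ τ)^[n] [(a, 1)], p.1 = a')
    (lam : ℝ) (hlam : 1 < lam)
    (hbase : baseSet σ τ = {x : ℝ | ∃ n : ℤ, x = lam ^ n}) :
    IsAlgebraic ℚ lam := by
  classical
  obtain ⟨n0, hn0, hpaths⟩ := hprim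
  set a0 : A := default with ha0
  have hlam0 : (0:ℝ) < lam := lt_trans one_pos hlam
  -- ρ : uniform bound on weights
  have hAne : (Finset.univ : Finset A).Nonempty := ⟨default, Finset.mem_univ _⟩
  set ρ : ℝ := Finset.univ.sup' hAne (fun a => (τ a).foldr max 0) with hρdef
  have hρub : ∀ a, ∀ w ∈ τ a, w ≤ ρ := fun a w hwa =>
    le_trans (B44.list_le_foldr_max _ w hwa)
      (Finset.le_sup' (f := fun a => (τ a).foldr max 0) (Finset.mem_univ a))
  have hρ1 : ρ < 1 := by
    rw [hρdef]
    exact (Finset.sup'_lt_iff hAne).2 fun a _ => B44.list_foldr_max_lt _ fun w hwa => (hw a w hwa).2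
  have hwpos : ∀ a, ∀ w ∈ τ a, 0 < w := fun a w hwa => (hw a w hwa).1
  have hτne : ∀ a, τ a ≠ [] := by
    intro a h
    have := hlen a
    rw [h] at this
    exact hne a (List.length_eq_zero_iff.1 (by simpa using this))
  have hρ0 : 0 < ρ := by
    obtain ⟨w0, hw0⟩ := List.exists_mem_of_ne_nil _ (hτne default)
    exact lt_of_lt_of_le (hwpos default w0 hw0) (hρub default w0 hw0)
  -- bound lemma specialised
  have wbound : ∀ {n : ℕ} {a b : A} {w : ℝ}, (b, w) ∈ (wStep σ τ)^[n] [(a,1)] →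
      0 < w ∧ w ≤ ρ ^ n := fun h => B44.weight_bound σ τ hwpos hρub h
  -- connecting paths
  have hv' : ∀ b : A, ∃ w, (b, w) ∈ (wStep σ τ)^[n0] [(a0, 1)] := by
    intro b
    obtain ⟨p, hp, hp1⟩ := hpaths a0 b
    exact ⟨p.2, by rw [← hp1, Prod.mk.eta]; exact hp⟩
  choose v hvmem using hv'
  have hu' : ∀ b : A, ∃ w, (a0, w) ∈ (wStep σ τ)^[n0] [(b, 1)] := by
    intro b
    obtain ⟨p, hp, hp1⟩ := hpaths b a0
    exact ⟨p.2, by rw [← hp1, Prod.mk.eta]; exact hp⟩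
  choose u humem using hu'
  have hvpos : ∀ b, 0 < v b := fun b => (wbound (hvmem b)).1
  have hupos : ∀ b, 0 < u b := fun b => (wbound (humem b)).1
  -- every base generator is a power of lam
  have hgen : ∀ g ∈ baseGens σ τ, ∃ z : ℤ, g = lam ^ z := by
    intro g hg
    have hmem : g ∈ baseSet σ τ := by
      obtain ⟨n, a, hmemg⟩ := id hg
      refine ⟨(wbound hmemg).1, ?_⟩
      exact subset_closure (Submonoid.subset_closure (Or.inl hg))
    rw [hbase] at hmem
    exact hmem
  -- every weight of a path from a0 to b is lam^z * v b
  have hpathexp : ∀ {n : ℕ} {b : A} {w : ℝ}, (b, w) ∈ (wStep σ τ)^[n] [(a0, 1)] →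
      ∃ z : ℤ, w = lam ^ z * v b := by
    intro n b w h
    obtain ⟨z1, hz1⟩ := hgen (w * u b) ⟨n + n0, a0, B44.wStep_comp σ τ h (humem b)⟩
    obtain ⟨z2, hz2⟩ := hgen (v b * u b) ⟨n0 + n0, a0, B44.wStep_comp σ τ (hvmem b) (humem b)⟩
    refine ⟨z1 - z2, ?_⟩
    have hu0 : u b ≠ 0 := (hupos b).ne'
    have hv0 : v b ≠ 0 := (hvpos b).ne'
    rw [zpow_sub₀ hlam0.ne', ← hz1, ← hz2]
    field_simp
  -- one-step membership
  have edge_mem : ∀ (a : A) (i : Fin (σ a).length),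
      ((σ a).get i, (τ a).get (Fin.cast (hlen a) i)) ∈ (wStep σ τ)^[1] [(a, 1)] := by
    intro a i
    rw [Function.iterate_one]
    have hil : (i : ℕ) < ((σ a).zip (τ a)).length := by
      rw [List.length_zip, ← hlen a, min_self]; exact i.isLt
    have h1 : ((σ a).get i, (τ a).get (Fin.cast (hlen a) i)) ∈ (σ a).zip (τ a) := by
      have := List.getElem_mem hil
      rwa [List.getElem_zip] at this
    have h2 : ((σ a).get i, 1 * (τ a).get (Fin.cast (hlen a) i)) ∈ wStep σ τ [(a, 1)] := by
      show _ ∈ [(a, (1:ℝ))].flatMap _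
      rw [List.flatMap_singleton]
      exact List.mem_map_of_mem h1
    simpa using h2
  -- edge exponents
  have hedge : ∀ (a : A) (i : Fin (σ a).length), ∃ z : ℤ,
      v a * (τ a).get (Fin.cast (hlen a) i) = lam ^ z * v ((σ a).get i) := by
    intro a i
    exact hpathexp (B44.wStep_comp σ τ (hvmem a) (edge_mem a i))
  choose ζ hζ using hedge
  -- choice of R
  have hlogρ : Real.log ρ < 0 := Real.log_neg hρ0 hρ1
  have hloglam : 0 < Real.log lam := Real.log_pos hlam
  obtain ⟨R, hR1, hRρ⟩ : ∃ R : ℕ, 1 ≤ R ∧ Real.log lam ≤ (R : ℝ) * (-Real.log ρ) := by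
    obtain ⟨R0, hR0⟩ := exists_nat_ge (Real.log lam / (-Real.log ρ))
    refine ⟨R0 + 1, Nat.le_add_left 1 R0, ?_⟩
    have hpos : (0:ℝ) < -Real.log ρ := by linarith
    rw [div_le_iff₀ hpos] at hR0
    have : (R0 : ℝ) ≤ ((R0 + 1 : ℕ) : ℝ) := by push_cast; linarith
    nlinarith
  have hR0' : (R : ℝ) ≠ 0 := by positivity
  -- the cost sets and their minima
  set P : A → ℤ → Prop := fun b j => ∃ (n : ℕ) (k : ℤ),
    (b, lam ^ k * v b) ∈ (wStep σ τ)^[n] [(a0, 1)] ∧ j = -(R:ℤ) * k - n with hPdef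
  have hPne : ∀ b, ∃ j, P b j := by
    intro b
    refine ⟨-(n0:ℤ), n0, 0, ?_, by ring⟩
    simpa using hvmem b
  have hPbdd : ∀ b (j : ℤ), P b j → (⌊(R:ℝ) * Real.log (v b) / Real.log lam⌋ : ℤ) ≤ j := by
    rintro b j ⟨n, k, hmem, hj⟩
    have hwle : lam ^ k * v b ≤ ρ ^ n := (wbound hmem).2
    have hpos1 : (0:ℝ) < lam ^ k * v b := mul_pos (zpow_pos hlam0 _) (hvpos b)
    have hlog := Real.log_le_log hpos1 hwle
    rw [Real.log_mul (zpow_pos hlam0 _).ne' (hvpos b).ne', Real.log_zpow, Real.log_pow] at hlog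
    have hkey : (R:ℝ) * Real.log (v b) / Real.log lam ≤ ((-(R:ℤ) * k - n : ℤ) : ℝ) := by
      rw [div_le_iff₀ hloglam]
      push_cast
      nlinarith [mul_le_mul_of_nonneg_left hlog (by positivity : (0:ℝ) ≤ (R:ℝ)),
        mul_le_mul_of_nonneg_left hRρ (Nat.cast_nonneg n : (0:ℝ) ≤ (n:ℝ))]
    rw [hj]
    exact_mod_cast le_trans (Int.floor_le _) hkey
  have hd : ∀ b, ∃ j, P b j ∧ ∀ j', P b j' → j ≤ j' := by
    intro b
    obtain ⟨lb, h1, h2⟩ := Int.exists_least_of_bdd ⟨_, hPbdd b⟩ (hPne b)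
    exact ⟨lb, h1, h2⟩
  choose d hdmem hdle using hd
  -- the potential inequality along edges
  have hekey : ∀ (a : A) (i : Fin (σ a).length),
      d ((σ a).get i) ≤ d a - (R:ℤ) * (ζ a i) - 1 := by
    intro a i
    obtain ⟨n, k, hmem, hj⟩ := hdmem a
    have hcomp := B44.wStep_comp σ τ hmem (edge_mem a i)
    have hval : lam ^ k * v a * ((τ a).get (Fin.cast (hlen a) i))
        = lam ^ (k + ζ a i) * v ((σ a).get i) := by
      rw [mul_assoc, hζ a i, zpow_add₀ hlam0.ne']
      ring
    rw [hval] at hcomp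
    have hle := hdle ((σ a).get i) _ ⟨n + 1, k + ζ a i, hcomp, rfl⟩
    have hexp : -(R:ℤ) * (k + ζ a i) - ((n : ℤ) + 1) = (-(R:ℤ) * k - n) - (R:ℤ) * (ζ a i) - 1 := by
      ring
    rw [show ((n+1 : ℕ) : ℤ) = (n : ℤ) + 1 from by push_cast; ring, hexp, ← hj] at hle
    exact hle
  -- natural number exponents
  set E : (a : A) → Fin (σ a).length → ℕ :=
    fun a i => (d a - (R:ℤ) * (ζ a i) - d ((σ a).get i)).toNat with hEdef
  have hEcast : ∀ a i, ((E a i : ℕ) : ℤ) = d a - (R:ℤ) * (ζ a i) - d ((σ a).get i) := by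
    intro a i
    rw [hEdef]
    exact Int.toNat_of_nonneg (by have := hekey a i; omega)
  have hE1 : ∀ a i, 1 ≤ E a i := by
    intro a i
    have h1 := hekey a i
    have h2 := hEcast a i
    omega
  -- the eigen data
  set c : ℝ := -((R:ℝ))⁻¹ with hcdef
  set y0 : ℝ := lam ^ c with hy0def
  have hy0pos : 0 < y0 := Real.rpow_pos_of_pos hlam0 _
  set v' : A → ℝ := fun x => lam ^ (-(d x : ℝ)/(R:ℝ)) * v x with hv'def
  have hv'pos : ∀ x, 0 < v' x := fun x =>
    mul_pos (Real.rpow_pos_of_pos hlam0 _) (hvpos x)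
  have hRpos : (0:ℝ) < (R:ℝ) := by positivity
  have hkey : ∀ (a : A) (i : Fin (σ a).length),
      y0 ^ (E a i) * v' ((σ a).get i) = v' a * (τ a).get (Fin.cast (hlen a) i) := by
    intro a i
    have hy0E : y0 ^ (E a i) = lam ^ (c * ((E a i : ℕ) : ℝ)) := by
      rw [Real.rpow_mul hlam0.le, Real.rpow_natCast]
    have hEC : ((E a i : ℕ) : ℝ) = (d a : ℝ) - (R:ℝ) * ((ζ a i : ℤ) : ℝ) - (d ((σ a).get i) : ℝ) := by
      have h := congrArg (fun z : ℤ => (z : ℝ)) (hEcast a i)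
      push_cast at h
      exact h
    rw [hy0E, hv'def]
    simp only []
    rw [← mul_assoc, ← Real.rpow_add hlam0]
    have hexp : c * ((E a i : ℕ) : ℝ) + (-(d ((σ a).get i) : ℝ)/(R:ℝ))
        = (-(d a : ℝ)/(R:ℝ)) + ((ζ a i : ℤ) : ℝ) := by
      rw [hEC, hcdef]
      field_simp
      ring
    rw [hexp, Real.rpow_add hlam0, mul_assoc, Real.rpow_intCast, ← hζ a i]
    ring
  -- row sums of τ are 1, as Finset sums
  have hsum' : ∀ a : A, ∑ i : Fin (σ a).length, (τ a).get (Fin.cast (hlen a) i) = 1 := by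
    intro a
    rw [Fin.sum_congr' _ (hlen a)]
    rw [show ∑ j : Fin (τ a).length, (τ a).get j = (τ a).sum from ?_]
    · exact hsum a
    · rw [← List.sum_ofFn]
      congr 1
      exact (List.ofFn_get (τ a))
  -- the matrix and its determinant polynomial
  set M : Matrix A A (Polynomial ℚ) := fun a b =>
    ∑ i : Fin (σ a).length, if (σ a).get i = b then (Polynomial.X : Polynomial ℚ) ^ (E a i) else 0 with hMdef
  set Q : Polynomial ℚ := (1 - M).det with hQdef
  have hQ0 : Polynomial.eval 0 Q = 1 := by
    have h1 : (Polynomial.evalRingHom (0:ℚ)) Q = ((Polynomial.evalRingHom (0:ℚ)).mapMatrix (1 - M)).det :=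
      RingHom.map_det _ _
    have h2 : (Polynomial.evalRingHom (0:ℚ)).mapMatrix (1 - M) = (1 : Matrix A A ℚ) := by
      rw [map_sub, map_one]
      have hM0 : (Polynomial.evalRingHom (0:ℚ)).mapMatrix M = 0 := by
        ext a b
        rw [RingHom.mapMatrix_apply]
        show Polynomial.eval 0 (M a b) = (0 : Matrix A A ℚ) a b
        rw [hMdef]
        simp only [Matrix.zero_apply]
        rw [Polynomial.eval_finset_sum]
        refine Finset.sum_eq_zero fun i _ => ?_
        rw [apply_ite (Polynomial.eval (0:ℚ)), Polynomial.eval_pow, Polynomial.eval_X,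
          Polynomial.eval_zero, zero_pow (Nat.one_le_iff_ne_zero.mp (hE1 a i))]
        simp
      rw [hM0, sub_zero]
    show (Polynomial.evalRingHom (0:ℚ)) Q = 1
    rw [h1, h2, Matrix.det_one]
  have hQne : Q ≠ 0 := fun h => by simp [h] at hQ0
  have haeval : (Polynomial.aeval y0) Q = 0 := by
    set f : Polynomial ℚ →+* ℝ := (Polynomial.aeval y0 : Polynomial ℚ →ₐ[ℚ] ℝ).toRingHom with hfdef
    have h1 : f Q = (f.mapMatrix (1 - M)).det := RingHom.map_det _ _
    set Mr : Matrix A A ℝ := fun a b =>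
      ∑ i : Fin (σ a).length, if (σ a).get i = b then y0 ^ (E a i) else 0 with hMrdef
    have h2 : f.mapMatrix (1 - M) = 1 - Mr := by
      rw [map_sub, map_one]
      congr 1
      ext a b
      rw [RingHom.mapMatrix_apply]
      show f (M a b) = Mr a b
      rw [hMdef, hMrdef]
      simp only []
      rw [map_sum]
      refine Finset.sum_congr rfl fun i _ => ?_
      rw [apply_ite f, map_pow, map_zero]
      congr 2
      exact Polynomial.aeval_X y0
    have h3 : Mr.mulVec v' = v' := by
      funext a
      have hrfl : Mr.mulVec v' a = ∑ b, Mr a b * v' b := rfl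
      rw [hrfl]
      calc ∑ b, Mr a b * v' b
          = ∑ b, ∑ i : Fin (σ a).length, (if (σ a).get i = b then y0 ^ E a i * v' b else 0) := by
            refine Finset.sum_congr rfl fun b _ => ?_
            rw [hMrdef]
            simp only []
            rw [Finset.sum_mul]
            refine Finset.sum_congr rfl fun i _ => ?_
            rw [ite_mul, zero_mul]
        _ = ∑ i : Fin (σ a).length, ∑ b, (if (σ a).get i = b then y0 ^ E a i * v' b else 0) :=
            Finset.sum_comm
        _ = ∑ i : Fin (σ a).length, y0 ^ E a i * v' ((σ a).get i) := by
            refine Finset.sum_congr rfl fun i _ => ?_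
            rw [Finset.sum_ite_eq]
            exact if_pos (Finset.mem_univ _)
        _ = ∑ i : Fin (σ a).length, v' a * (τ a).get (Fin.cast (hlen a) i) := by
            refine Finset.sum_congr rfl fun i _ => ?_
            exact hkey a i
        _ = v' a := by rw [← Finset.mul_sum, hsum' a, mul_one]
    have h4 : (1 - Mr).det = 0 := by
      rw [← Matrix.exists_mulVec_eq_zero_iff]
      refine ⟨v', ?_, ?_⟩
      · intro h
        have hc := congrFun h default
        exact (hv'pos default).ne' (by simpa using hc)
      · rw [Matrix.sub_mulVec, Matrix.one_mulVec, h3, sub_self]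
    have : f Q = 0 := by rw [h1, h2, h4]
    exact this
  have halg0 : IsAlgebraic ℚ y0 := ⟨Q, hQne, haeval⟩
  have halgR : IsAlgebraic ℚ (y0 ^ R) :=
    ((isAlgebraic_iff_isIntegral.mp halg0).pow R).isAlgebraic
  have hy0R : y0 ^ R = lam⁻¹ := by
    rw [hy0def, ← Real.rpow_natCast (lam ^ c) R, ← Real.rpow_mul hlam0.le]
    rw [show c * (R:ℝ) = -1 by rw [hcdef]; field_simp]
    exact Real.rpow_neg_one lam
  rw [hy0R] at halgR
  have hfin := halgR.inv
  rwa [inv_inv] at hfin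
end
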